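/- Let A, B be positive definite d×d matrices, M invertible, ε > 0. Define F = A^{-1}((ε/2)I + (A M B Mᵀ + (ε²/4)I)^{1/2}) and G = ε B^{-1} + Mᵀ F^{-1} M, where the square root is defined by conjugation with A^{1/2}. Then F and G are symmetric positive definite and satisfy the system: F A F − ε F − M B Mᵀ = 0 and G − Mᵀ F^{-1} M = ε B^{-1}; consequently the block matrix [[F, −M],[−Mᵀ, G]] is positive definite. -/

import Mathlib

open Matrix

open Classical in
/-- The positive semidefinite square root (zero if not positive semidefinite). -/
noncomputable def psqrt {d : ℕ} (X : Matrix (Fin d) (Fin d) ℝ) : Matrix (Fin d) (Fin d) ℝ :=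
  if h : X.PosSemidef then
    h.1.eigenvectorUnitary.1 * diagonal (Real.sqrt ∘ h.1.eigenvalues) *
      (star h.1.eigenvectorUnitary : Matrix (Fin d) (Fin d) ℝ)
  else 0

lemma psqrt_spec {d : ℕ} {X : Matrix (Fin d) (Fin d) ℝ} (h : X.PosSemidef) :
    (psqrt X).PosSemidef ∧ psqrt X * psqrt X = X := by
  have hX : psqrt X = h.1.eigenvectorUnitary.1 * diagonal (Real.sqrt ∘ h.1.eigenvalues) *
      (star h.1.eigenvectorUnitary : Matrix (Fin d) (Fin d) ℝ) := dif_pos h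
  set U := h.1.eigenvectorUnitary
  have hU : (star U : Matrix (Fin d) (Fin d) ℝ) * U.1 = 1 := Unitary.coe_star_mul_self U
  have hD : (diagonal (Real.sqrt ∘ h.1.eigenvalues)).PosSemidef :=
    PosSemidef.diagonal (fun i => Real.sqrt_nonneg _)
  constructor
  · rw [hX]
    have := hD.conjTranspose_mul_mul_same (star U.1)
    rwa [star_eq_conjTranspose, conjTranspose_conjTranspose, ← star_eq_conjTranspose,
      ← Unitary.coe_star] at this
  · rw [hX]
    conv_rhs => rw [h.1.spectral_theorem, Unitary.conjStarAlgAut_apply]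
    have hdd : diagonal (Real.sqrt ∘ h.1.eigenvalues) * diagonal (Real.sqrt ∘ h.1.eigenvalues)
        = diagonal (RCLike.ofReal ∘ h.1.eigenvalues) := by
      rw [diagonal_mul_diagonal]; congr 1; funext i
      simp [Real.mul_self_sqrt (h.eigenvalues_nonneg i)]
    calc _ = U.1 * (diagonal (Real.sqrt ∘ h.1.eigenvalues) * ((star U : Matrix (Fin d) (Fin d) ℝ)
          * U.1) * diagonal (Real.sqrt ∘ h.1.eigenvalues)) * (star U : Matrix (Fin d) (Fin d) ℝ) := by
          simp only [Matrix.mul_assoc]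
      _ = _ := by rw [hU, Matrix.mul_one, hdd]

section aux

variable {n : Type*} [Fintype n] [DecidableEq n]

omit [DecidableEq n] in
lemma posDef_smul {X : Matrix n n ℝ} (hX : X.PosDef) {c : ℝ} (hc : 0 < c) :
    (c • X).PosDef := by
  have hherm : (c • X).IsHermitian := by
    show (c • X)ᴴ = c • X
    rw [conjTranspose_smul, hX.1.eq]
    simp
  refine PosDef.of_dotProduct_mulVec_pos hherm fun x hx => ?_
  rw [smul_mulVec, dotProduct_smul, smul_eq_mul]
  exact mul_pos hc (hX.dotProduct_mulVec_pos hx)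

lemma posDef_conj {X N : Matrix n n ℝ} (hX : X.PosDef) (hN : IsUnit N.det) :
    (Nᵀ * X * N).PosDef := by
  have hXt : Xᵀ = X := (conjTranspose_eq_transpose_of_trivial X) ▸ hX.1.eq
  refine PosDef.of_dotProduct_mulVec_pos ?_ ?_
  · show (Nᵀ * X * N)ᴴ = Nᵀ * X * N
    simp only [conjTranspose_mul, conjTranspose_eq_transpose_of_trivial,
      transpose_mul, transpose_transpose, hXt, Matrix.mul_assoc]
  · intro x hx
    have hxN : N *ᵥ x ≠ 0 := fun h => hx (mulVec_injective_iff_isUnit.2 ((Matrix.isUnit_iff_isUnit_det N).mpr hN) (by simpa using h))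
    have key : star x ⬝ᵥ (Nᵀ * X * N) *ᵥ x = star (N *ᵥ x) ⬝ᵥ X *ᵥ (N *ᵥ x) := by
      rw [← mulVec_mulVec, ← mulVec_mulVec, dotProduct_mulVec (star x),
        star_mulVec, conjTranspose_eq_transpose_of_trivial, dotProduct_mulVec]
    rw [key]
    exact hX.dotProduct_mulVec_pos hxN

lemma posDef_fromBlocks {A : Matrix n n ℝ} (B : Matrix n n ℝ) {D : Matrix n n ℝ}
    (hA : A.PosDef) (h : (D - Bᴴ * A⁻¹ * B).PosDef) :
    (fromBlocks A B Bᴴ D).PosDef := by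
  have : Invertible A := hA.isUnit.invertible
  refine PosDef.of_dotProduct_mulVec_pos ?_ ?_
  · exact (IsHermitian.fromBlocks₁₁ B D hA.1).mpr h.1
  · intro x hx
    rw [← Sum.elim_comp_inl_inr x, dotProduct_mulVec,
      schur_complement_eq₁₁ B D _ _ hA.1]
    by_cases hy : x ∘ Sum.inr = 0
    · have hxl : x ∘ Sum.inl ≠ 0 := by
        intro h0
        apply hx
        funext i
        cases i with
        | inl i => exact congrFun h0 i
        | inr i => exact congrFun hy i
      rw [hy]
      simp only [mulVec_zero, add_zero, dotProduct_zero, vecMul_zero, zero_dotProduct]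
      rw [← dotProduct_mulVec]
      have := hA.dotProduct_mulVec_pos hxl
      linarith [this]
    · have h1 : (0:ℝ) ≤ star (x ∘ Sum.inl + (A⁻¹ * B) *ᵥ (x ∘ Sum.inr)) ᵥ* A ⬝ᵥ
          (x ∘ Sum.inl + (A⁻¹ * B) *ᵥ (x ∘ Sum.inr)) := by
        rw [← dotProduct_mulVec]
        exact hA.posSemidef.dotProduct_mulVec_nonneg _
      have h2 : (0:ℝ) < star (x ∘ Sum.inr) ᵥ* (D - Bᴴ * A⁻¹ * B) ⬝ᵥ (x ∘ Sum.inr) := by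
        rw [← dotProduct_mulVec]
        exact h.dotProduct_mulVec_pos hy
      linarith

end aux

theorem stmt18 {d : ℕ} (A B M : Matrix (Fin d) (Fin d) ℝ) (hA : A.PosDef) (hB : B.PosDef)
    (hM : IsUnit M.det) (ε : ℝ) (hε : 0 < ε)
    (F G : Matrix (Fin d) (Fin d) ℝ)
    (hF : F = A⁻¹ * ((ε / 2) • 1 +
        psqrt A * psqrt (psqrt A * (M * B * Mᵀ) * psqrt A + (ε ^ 2 / 4) • 1) * (psqrt A)⁻¹))
    (hG : G = ε • B⁻¹ + Mᵀ * F⁻¹ * M) :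
    F.PosDef ∧ G.PosDef ∧
      F * A * F - ε • F - M * B * Mᵀ = 0 ∧
      G - Mᵀ * F⁻¹ * M = ε • B⁻¹ ∧
      (Matrix.fromBlocks F (-M) (-Mᵀ) G).PosDef := by
  have hAps := hA.posSemidef
  set S := psqrt A with hSeq
  have hSsem : S.PosSemidef := (psqrt_spec hAps).1
  have hSS : S * S = A := (psqrt_spec hAps).2
  have hSt : Sᵀ = S := (conjTranspose_eq_transpose_of_trivial S) ▸ hSsem.1.eq
  have hdetS : IsUnit S.det := by
    rw [isUnit_iff_ne_zero]
    intro h0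
    have : A.det = 0 := by rw [← hSS, det_mul, h0, mul_zero]
    exact (ne_of_gt hA.det_pos) this
  have hMBMt : (M * B * Mᵀ).PosDef := by
    have := posDef_conj (N := Mᵀ) hB (by rwa [det_transpose])
    simpa using this
  have hC : (S * (M * B * Mᵀ) * S + (ε ^ 2 / 4) • 1).PosDef := by
    refine Matrix.PosDef.add ?_ (posDef_smul Matrix.PosDef.one (by positivity))
    have := posDef_conj (N := S) hMBMt hdetS
    rwa [hSt] at this
  have hCps := hC.posSemidef
  set R := psqrt (S * (M * B * Mᵀ) * S + (ε ^ 2 / 4) • 1) with hReq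
  have hRsem : R.PosSemidef := (psqrt_spec hCps).1
  have hRR : R * R = S * (M * B * Mᵀ) * S + (ε ^ 2 / 4) • 1 := (psqrt_spec hCps).2
  set P : Matrix (Fin d) (Fin d) ℝ := (ε / 2) • 1 + R with hPdef
  have hP : P.PosDef :=
    Matrix.PosDef.add_posSemidef (posDef_smul Matrix.PosDef.one (half_pos hε)) hRsem
  have hAinv : A⁻¹ = S⁻¹ * S⁻¹ := by rw [← hSS, Matrix.mul_inv_rev]
  have hFform : F = S⁻¹ * P * S⁻¹ := by
    rw [hF, hAinv, hPdef]
    rw [Matrix.mul_add, Matrix.mul_add, Matrix.add_mul]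
    congr 1
    · simp [Matrix.mul_smul, Matrix.smul_mul, Matrix.mul_one]
    · simp only [Matrix.mul_assoc]
      rw [Matrix.nonsing_inv_mul_cancel_left _ _ hdetS]
  have hdetSi : IsUnit (S⁻¹).det := S.isUnit_nonsing_inv_det hdetS
  have hSit : (S⁻¹)ᵀ = S⁻¹ := by rw [transpose_nonsing_inv, hSt]
  have hFpd : F.PosDef := by
    rw [hFform]
    have := posDef_conj (N := S⁻¹) hP hdetSi
    rwa [hSit] at this
  have hPP : P * P = ε • P + S * (M * B * Mᵀ) * S := by
    have expand : P * P = (ε / 2 * (ε / 2)) • (1 : Matrix (Fin d) (Fin d) ℝ)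
        + (ε / 2) • R + (ε / 2) • R + R * R := by
      rw [hPdef, Matrix.add_mul, Matrix.mul_add, Matrix.mul_add]
      simp only [Matrix.smul_mul, Matrix.mul_smul, Matrix.mul_one, Matrix.one_mul, smul_smul]
      abel
    rw [expand, hRR, hPdef]
    match_scalars <;> ring
  have hFAF : F * A * F = ε • F + M * B * Mᵀ := by
    have hFA : F * A * F = S⁻¹ * (P * P) * S⁻¹ := by
      rw [hFform, ← hSS]
      simp only [Matrix.mul_assoc]
      rw [Matrix.nonsing_inv_mul_cancel_left _ _ hdetS,
        Matrix.mul_nonsing_inv_cancel_left _ _ hdetS]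
    rw [hFA, hPP, Matrix.mul_add, Matrix.add_mul]
    congr 1
    · rw [Matrix.mul_smul, Matrix.smul_mul, hFform]
    · simp only [Matrix.mul_assoc]
      rw [Matrix.nonsing_inv_mul_cancel_left _ _ hdetS,
        Matrix.mul_nonsing_inv _ hdetS, Matrix.mul_one]
  have hGpd : G.PosDef := by
    rw [hG]
    exact (posDef_smul hB.inv hε).add (posDef_conj hFpd.inv hM)
  have hSchur : G - Mᵀ * F⁻¹ * M = ε • B⁻¹ := by rw [hG, add_sub_cancel_right]
  refine ⟨hFpd, hGpd, ?_, hSchur, ?_⟩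
  · rw [hFAF]; abel
  · have hMc : (-Mᵀ) = (-M)ᴴ := by
      rw [conjTranspose_neg, conjTranspose_eq_transpose_of_trivial]
    rw [hMc]
    apply posDef_fromBlocks (-M) hFpd
    have : G - (-M)ᴴ * F⁻¹ * (-M) = G - Mᵀ * F⁻¹ * M := by
      rw [← hMc]; simp [Matrix.neg_mul, Matrix.mul_neg]
    rw [this, hSchur]
    exact posDef_smul hB.inv hε
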